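/- There is no nonzero assignment of orthogonal projections to translates on the real line compatible with a positive-energy translation group and orthogonality at disjoint separation: if U(a) = exp(iaP) is a strongly continuous unitary group on a Hilbert space with P ≥ 0, and E is a nonzero projection such that E·U(a)E U(a)⁻¹ = 0 for all a in some nonempty open interval I not containing 0, then E = 0. -/

import Mathlib

open Complex Set MeasureTheory intervalIntegral Metric

noncomputable def rectInt (G : ℂ → ℂ) (x₁ x₂ y₁ y₂ : ℝ) : ℂ :=
  ((∫ t : ℝ in x₁..x₂, G (t + y₁ * I)) - ∫ t : ℝ in x₁..x₂, G (t + y₂ * I)) +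
    I • (∫ s : ℝ in y₁..y₂, G (x₂ + s * I)) - I • (∫ s : ℝ in y₁..y₂, G (x₁ + s * I))

lemma vert_integrable {G : ℂ → ℂ} {D : Set ℂ} (hGc : ContinuousOn G D)
    (x : ℝ) (y₁ y₂ : ℝ) (h : ∀ s ∈ uIcc y₁ y₂, (x : ℂ) + s * I ∈ D) :
    IntervalIntegrable (fun s : ℝ => G ((x : ℂ) + s * I)) volume y₁ y₂ := by
  apply ContinuousOn.intervalIntegrable
  exact hGc.comp (by fun_prop) (fun s hs => h s hs)

lemma horiz_integrable {G : ℂ → ℂ} {D : Set ℂ} (hGc : ContinuousOn G D)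
    (y : ℝ) (x₁ x₂ : ℝ) (h : ∀ t ∈ uIcc x₁ x₂, (t : ℂ) + y * I ∈ D) :
    IntervalIntegrable (fun t : ℝ => G ((t : ℂ) + y * I)) volume x₁ x₂ := by
  apply ContinuousOn.intervalIntegrable
  exact hGc.comp (by fun_prop) (fun s hs => h s hs)

lemma rectInt_split {G : ℂ → ℂ} {D : Set ℂ} (hGc : ContinuousOn G D)
    (x₁ x₂ y₁ y₂ y₃ : ℝ) (hsub : uIcc x₁ x₂ ×ℂ uIcc y₁ y₂ ⊆ D) (hy : y₃ ∈ uIcc y₁ y₂) :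
    rectInt G x₁ x₂ y₁ y₂ = rectInt G x₁ x₂ y₁ y₃ + rectInt G x₁ x₂ y₃ y₂ := by
  have hx₁ : ∀ s ∈ uIcc y₁ y₂, (x₁ : ℂ) + s * I ∈ D := fun s hs =>
    hsub (Complex.mem_reProdIm.2 (by simp [left_mem_uIcc, hs]))
  have hx₂ : ∀ s ∈ uIcc y₁ y₂, (x₂ : ℂ) + s * I ∈ D := fun s hs =>
    hsub (Complex.mem_reProdIm.2 (by simp [right_mem_uIcc, hs]))
  have e₂ := integral_add_adjacent_intervals
    (vert_integrable hGc x₂ y₁ y₃ (fun s hs => hx₂ s (uIcc_subset_uIcc left_mem_uIcc hy hs)))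
    (vert_integrable hGc x₂ y₃ y₂ (fun s hs => hx₂ s (uIcc_subset_uIcc hy right_mem_uIcc hs)))
  have e₁ := integral_add_adjacent_intervals
    (vert_integrable hGc x₁ y₁ y₃ (fun s hs => hx₁ s (uIcc_subset_uIcc left_mem_uIcc hy hs)))
    (vert_integrable hGc x₁ y₃ y₂ (fun s hs => hx₁ s (uIcc_subset_uIcc hy right_mem_uIcc hs)))
  simp only [rectInt, smul_eq_mul]
  rw [← e₁, ← e₂]
  ring

lemma rectInt_zero {G : ℂ → ℂ} {D : Set ℂ} (hGc : ContinuousOn G D)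
    (hGd : ∀ z ∈ D, z.im ≠ 0 → DifferentiableAt ℂ G z)
    (x₁ x₂ y₁ y₂ : ℝ) (hsub : uIcc x₁ x₂ ×ℂ uIcc y₁ y₂ ⊆ D) :
    rectInt G x₁ x₂ y₁ y₂ = 0 := by
  have basic : ∀ u v : ℝ, uIcc x₁ x₂ ×ℂ uIcc u v ⊆ D → (0:ℝ) ∉ Ioo (u ⊓ v) (u ⊔ v) →
      rectInt G x₁ x₂ u v = 0 := by
    intro u v hs h0
    have := Complex.integral_boundary_rect_eq_zero_of_differentiable_on_off_countable G
      ⟨x₁, u⟩ ⟨x₂, v⟩ ∅ countable_empty (hGc.mono hs) ?_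
    · simpa [rectInt] using this
    · rintro z ⟨hz, -⟩
      rw [Complex.mem_reProdIm] at hz
      refine hGd z (hs ?_) ?_
      · exact Complex.mem_reProdIm.2 ⟨Ioo_subset_Icc_self hz.1, Ioo_subset_Icc_self hz.2⟩
      · intro h; rw [h] at hz; exact h0 hz.2
  by_cases h0 : (0:ℝ) ∈ Ioo (y₁ ⊓ y₂) (y₁ ⊔ y₂)
  · have hy : (0:ℝ) ∈ uIcc y₁ y₂ := Ioo_subset_Icc_self h0
    rw [rectInt_split hGc x₁ x₂ y₁ y₂ 0 hsub hy]
    have s₁ : uIcc x₁ x₂ ×ℂ uIcc y₁ (0:ℝ) ⊆ D := fun z hz => by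
      rw [Complex.mem_reProdIm] at hz
      exact hsub (Complex.mem_reProdIm.2 ⟨hz.1, uIcc_subset_uIcc left_mem_uIcc hy hz.2⟩)
    have s₂ : uIcc x₁ x₂ ×ℂ uIcc (0:ℝ) y₂ ⊆ D := fun z hz => by
      rw [Complex.mem_reProdIm] at hz
      exact hsub (Complex.mem_reProdIm.2 ⟨hz.1, uIcc_subset_uIcc hy right_mem_uIcc hz.2⟩)
    have n₁ : (0:ℝ) ∉ Ioo (y₁ ⊓ 0) (y₁ ⊔ 0) := by
      simp only [Set.mem_Ioo, inf_lt_iff, lt_sup_iff, lt_irrefl, or_false]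
      rintro ⟨h1, h2⟩; linarith
    have n₂ : (0:ℝ) ∉ Ioo ((0:ℝ) ⊓ y₂) ((0:ℝ) ⊔ y₂) := by
      simp only [Set.mem_Ioo, inf_lt_iff, lt_sup_iff, lt_irrefl, false_or]
      rintro ⟨h1, h2⟩; linarith
    rw [basic y₁ 0 s₁ n₁, basic 0 y₂ s₂ n₂, add_zero]
  · exact basic y₁ y₂ hsub h0

lemma mem_ball_sq {c r : ℝ} (hr : 0 < r) (w : ℂ) :
    w ∈ Metric.ball (c : ℂ) r ↔ (w.re - c)^2 + w.im^2 < r^2 := by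
  have key : (‖w - c‖)^2 = (w.re - c)^2 + w.im^2 := by
    rw [Complex.sq_norm, Complex.normSq_apply]
    simp [Complex.sub_re, Complex.sub_im]
    ring
  rw [Metric.mem_ball, Complex.dist_eq]
  constructor
  · intro h; nlinarith [norm_nonneg (w - c)]
  · intro h; nlinarith [norm_nonneg (w - c)]

lemma sq_le_of_between {c u v t : ℝ} (h1 : u ≤ t) (h2 : t ≤ v) :
    (t - c)^2 ≤ (u - c)^2 ∨ (t - c)^2 ≤ (v - c)^2 := by
  rcases le_total t c with h | h
  · left; nlinarith
  · right; nlinarith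

lemma rect_subset_ball {c r : ℝ} (hr : 0 < r) {x₁ x₂ y₁ y₂ : ℝ}
    (h11 : (x₁ - c)^2 + y₁^2 < r^2) (h12 : (x₁ - c)^2 + y₂^2 < r^2)
    (h21 : (x₂ - c)^2 + y₁^2 < r^2) (h22 : (x₂ - c)^2 + y₂^2 < r^2) :
    uIcc x₁ x₂ ×ℂ uIcc y₁ y₂ ⊆ Metric.ball (c : ℂ) r := by
  intro p hp
  rw [Complex.mem_reProdIm] at hp
  rw [mem_ball_sq hr]
  have H1 : (p.re - c)^2 ≤ (x₁ - c)^2 ∨ (p.re - c)^2 ≤ (x₂ - c)^2 := by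
    rcases Set.mem_uIcc.1 hp.1 with ⟨ha, hb⟩ | ⟨ha, hb⟩
    · exact sq_le_of_between ha hb
    · exact (sq_le_of_between ha hb).symm
  have H2 : p.im^2 ≤ y₁^2 ∨ p.im^2 ≤ y₂^2 := by
    have := @sq_le_of_between 0
    rcases Set.mem_uIcc.1 hp.2 with ⟨ha, hb⟩ | ⟨ha, hb⟩
    · simpa using @sq_le_of_between 0 _ _ _ ha hb
    · simpa using (@sq_le_of_between 0 _ _ _ ha hb).symm
  rcases H1 with H1 | H1 <;> rcases H2 with H2 | H2 <;> linarith

noncomputable def prim (G : ℂ → ℂ) (c : ℝ) : ℂ → ℂ := fun z =>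
  (∫ t : ℝ in c..z.re, G (t + (0:ℝ) * I)) + I • ∫ s : ℝ in (0:ℝ)..z.im, G (z.re + s * I)

lemma abs_sub_le_of_uIoc {u v t : ℝ} (ht : t ∈ Set.uIoc u v) : |t - u| ≤ |v - u| := by
  rcases le_total u v with h | h
  · rw [Set.uIoc_of_le h] at ht
    rw [_root_.abs_of_nonneg (by linarith [ht.1]), _root_.abs_of_nonneg (by linarith)]
    linarith [ht.2]
  · rw [Set.uIoc_of_ge h] at ht
    rw [_root_.abs_of_nonpos (by linarith [ht.2]), _root_.abs_of_nonpos (by linarith)]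
    linarith [ht.1]

set_option maxHeartbeats 2000000 in
lemma prim_hasDerivAt {G : ℂ → ℂ} {c r : ℝ} (hr : 0 < r)
    (hGc : ContinuousOn G (Metric.ball (c:ℂ) r))
    (hGd : ∀ z ∈ Metric.ball (c:ℂ) r, z.im ≠ 0 → DifferentiableAt ℂ G z)
    {z₀ : ℂ} (hz₀ : z₀ ∈ Metric.ball (c:ℂ) r) :
    HasDerivAt (prim G c) (G z₀) z₀ := by
  set D := Metric.ball (c:ℂ) r with hDdef
  have hDopen : IsOpen D := Metric.isOpen_ball
  have hcont : ContinuousAt G z₀ := hGc.continuousAt (hDopen.mem_nhds hz₀)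
  have seg_mem : ∀ u v yy : ℝ, (u - c)^2 + yy^2 < r^2 → (v - c)^2 + yy^2 < r^2 →
      ∀ t ∈ uIcc u v, ((t:ℂ) + (yy:ℂ) * I) ∈ D := by
    intro u v yy h1 h2 t ht
    rw [hDdef, mem_ball_sq hr]
    simp only [Complex.add_re, Complex.ofReal_re, Complex.mul_re, Complex.I_re, Complex.I_im,
      Complex.ofReal_im, Complex.add_im, Complex.mul_im]
    ring_nf
    rcases Set.mem_uIcc.1 ht with ⟨ha, hb⟩ | ⟨ha, hb⟩
    · rcases sq_le_of_between ha hb with h | h <;> nlinarith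
    · rcases sq_le_of_between ha hb with h | h <;> nlinarith
  have vseg_mem : ∀ xx u v : ℝ, (xx - c)^2 + u^2 < r^2 → (xx - c)^2 + v^2 < r^2 →
      ∀ s ∈ uIcc u v, ((xx:ℂ) + (s:ℂ) * I) ∈ D := by
    intro xx u v h1 h2 s hs
    rw [hDdef, mem_ball_sq hr]
    simp only [Complex.add_re, Complex.ofReal_re, Complex.mul_re, Complex.I_re, Complex.I_im,
      Complex.ofReal_im, Complex.add_im, Complex.mul_im]
    ring_nf
    rcases Set.mem_uIcc.1 hs with ⟨ha, hb⟩ | ⟨ha, hb⟩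
    · rcases @sq_le_of_between 0 _ _ _ ha hb with h | h <;>
        simp only [sub_zero] at h <;> nlinarith
    · rcases @sq_le_of_between 0 _ _ _ ha hb with h | h <;>
        simp only [sub_zero] at h <;> nlinarith
  rw [hasDerivAt_iff_isLittleO, Asymptotics.isLittleO_iff]
  intro ε hε
  obtain ⟨δ₂, hδ₂pos, hδ₂⟩ := Metric.continuousAt_iff.1 hcont (ε/2) (half_pos hε)
  obtain ⟨δ₁, hδ₁pos, hδ₁⟩ := Metric.mem_nhds_iff.1 (hDopen.mem_nhds hz₀)
  set δ := min δ₁ δ₂ / 2 with hδdef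
  have hδpos : 0 < δ := by positivity
  filter_upwards [Metric.ball_mem_nhds z₀ hδpos] with z hz
  have hdist : dist z z₀ < δ := hz
  have hzD : z ∈ D := hδ₁ (Metric.mem_ball.2 (lt_of_lt_of_le hdist (by
    rw [hδdef]; rcases le_total δ₁ δ₂ with h | h <;> simp [min_eq_left, min_eq_right, h] <;> linarith)))
  have hre : |z.re - z₀.re| ≤ dist z z₀ := by
    rw [dist_eq_norm]
    simpa [Complex.sub_re] using Complex.abs_re_le_norm (z - z₀)
  have him : |z.im - z₀.im| ≤ dist z z₀ := by
    rw [dist_eq_norm]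
    simpa [Complex.sub_im] using Complex.abs_im_le_norm (z - z₀)
  have m0 : (z₀.re - c)^2 + z₀.im^2 < r^2 := (mem_ball_sq hr z₀).1 hz₀
  have m1 : (z.re - c)^2 + z.im^2 < r^2 := (mem_ball_sq hr z).1 hzD
  have hw₁D : ((z.re : ℂ) + (z₀.im : ℂ) * I) ∈ D := by
    have hd : dist ((z.re : ℂ) + (z₀.im : ℂ) * I) z₀ = |z.re - z₀.re| := by
      have e : ((z.re : ℂ) + (z₀.im : ℂ) * I) - z₀ = ((z.re - z₀.re : ℝ) : ℂ) := by
        apply Complex.ext <;> simp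
      rw [Complex.dist_eq, e, Complex.norm_real, Real.norm_eq_abs]
    refine hδ₁ (Metric.mem_ball.2 ?_)
    rw [hd]
    calc |z.re - z₀.re| ≤ dist z z₀ := hre
    _ < δ := hdist
    _ ≤ δ₁ := by rw [hδdef]; rcases le_total δ₁ δ₂ with h | h <;>
        simp [min_eq_left, min_eq_right, h] <;> linarith
  have m2 : (z.re - c)^2 + z₀.im^2 < r^2 := by
    have := (mem_ball_sq hr _).1 hw₁D
    simpa using this
  -- integrabilities
  have I1 : IntervalIntegrable (fun t : ℝ => G ((t:ℂ) + ((0:ℝ):ℂ) * I)) volume c z₀.re :=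
    horiz_integrable hGc 0 c z₀.re (seg_mem c z₀.re 0 (by nlinarith) (by nlinarith))
  have I2 : IntervalIntegrable (fun t : ℝ => G ((t:ℂ) + ((0:ℝ):ℂ) * I)) volume z₀.re z.re :=
    horiz_integrable hGc 0 z₀.re z.re (seg_mem z₀.re z.re 0 (by nlinarith) (by nlinarith))
  have J1 : IntervalIntegrable (fun s : ℝ => G ((z.re:ℂ) + (s:ℂ) * I)) volume 0 z₀.im :=
    vert_integrable hGc z.re 0 z₀.im (vseg_mem z.re 0 z₀.im (by nlinarith) (by nlinarith))
  have J2 : IntervalIntegrable (fun s : ℝ => G ((z.re:ℂ) + (s:ℂ) * I)) volume z₀.im z.im :=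
    vert_integrable hGc z.re z₀.im z.im (vseg_mem z.re z₀.im z.im (by nlinarith) (by nlinarith))
  have hsplitH := integral_add_adjacent_intervals I1 I2
  have hsplitV := integral_add_adjacent_intervals J1 J2
  have hrect : rectInt G z₀.re z.re 0 z₀.im = 0 := by
    refine rectInt_zero hGc hGd _ _ _ _ (rect_subset_ball hr ?_ ?_ ?_ ?_) <;> nlinarith
  set A := ∫ t : ℝ in z₀.re..z.re, G ((t:ℂ) + (z₀.im:ℂ) * I) with hA
  set B := ∫ s : ℝ in z₀.im..z.im, G ((z.re:ℂ) + (s:ℂ) * I) with hB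
  have claim : prim G c z - prim G c z₀ = A + I * B := by
    simp only [prim, smul_eq_mul, hA, hB]
    simp only [rectInt, smul_eq_mul] at hrect
    linear_combination (-1 : ℂ) * hsplitH + Complex.I * hsplitV.symm + hrect
  -- integrability at height y₀ and at vertical z.re for the difference estimates
  have IA : IntervalIntegrable (fun t : ℝ => G ((t:ℂ) + (z₀.im:ℂ) * I)) volume z₀.re z.re :=
    horiz_integrable hGc z₀.im z₀.re z.re (seg_mem z₀.re z.re z₀.im m0 m2)
  have decompose : z - z₀ = ((z.re - z₀.re : ℝ) : ℂ) + ((z.im - z₀.im : ℝ) : ℂ) * I := by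
    apply Complex.ext <;> simp
  have EH : A - ((z.re - z₀.re : ℝ) : ℂ) * G z₀
      = ∫ t : ℝ in z₀.re..z.re, (G ((t:ℂ) + (z₀.im:ℂ) * I) - G z₀) := by
    rw [intervalIntegral.integral_sub IA intervalIntegrable_const, intervalIntegral.integral_const,
      Complex.real_smul]
  have EV : B - ((z.im - z₀.im : ℝ) : ℂ) * G z₀
      = ∫ s : ℝ in z₀.im..z.im, (G ((z.re:ℂ) + (s:ℂ) * I) - G z₀) := by
    rw [intervalIntegral.integral_sub J2 intervalIntegrable_const, intervalIntegral.integral_const,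
      Complex.real_smul]
  have bound1 : ‖∫ t : ℝ in z₀.re..z.re, (G ((t:ℂ) + (z₀.im:ℂ) * I) - G z₀)‖
      ≤ (ε/2) * |z.re - z₀.re| := by
    apply intervalIntegral.norm_integral_le_of_norm_le_const
    intro t ht
    rw [← dist_eq_norm]
    refine (hδ₂ ?_).le
    have e : ((t:ℂ) + (z₀.im:ℂ) * I) - z₀ = ((t - z₀.re : ℝ) : ℂ) := by
      apply Complex.ext <;> simp
    rw [Complex.dist_eq, e, Complex.norm_real, Real.norm_eq_abs]
    calc |t - z₀.re| ≤ |z.re - z₀.re| := abs_sub_le_of_uIoc ht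
    _ ≤ dist z z₀ := hre
    _ < δ := hdist
    _ ≤ δ₂ := by rw [hδdef]; rcases le_total δ₁ δ₂ with h | h <;>
        simp [min_eq_left, min_eq_right, h] <;> linarith
  have bound2 : ‖∫ s : ℝ in z₀.im..z.im, (G ((z.re:ℂ) + (s:ℂ) * I) - G z₀)‖
      ≤ (ε/2) * |z.im - z₀.im| := by
    apply intervalIntegral.norm_integral_le_of_norm_le_const
    intro s hs
    rw [← dist_eq_norm]
    refine (hδ₂ ?_).le
    have e : ((z.re:ℂ) + (s:ℂ) * I) - z₀
        = ((z.re - z₀.re : ℝ) : ℂ) + ((s - z₀.im : ℝ) : ℂ) * I := by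
      apply Complex.ext <;> simp
    rw [Complex.dist_eq, e]
    calc ‖(((z.re - z₀.re : ℝ) : ℂ) + ((s - z₀.im : ℝ) : ℂ) * I)‖
        ≤ |z.re - z₀.re| + |s - z₀.im| := by
          refine le_trans (Complex.norm_le_abs_re_add_abs_im _) ?_
          simp
    _ ≤ dist z z₀ + |z.im - z₀.im| := by
          have := abs_sub_le_of_uIoc hs
          linarith [hre]
    _ ≤ dist z z₀ + dist z z₀ := by linarith [him]
    _ < δ + δ := by linarith
    _ ≤ δ₂ := by rw [hδdef]; rcases le_total δ₁ δ₂ with h | h <;>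
        simp [min_eq_left, min_eq_right, h] <;> linarith
  have final : prim G c z - prim G c z₀ - (z - z₀) • G z₀
      = (A - ((z.re - z₀.re : ℝ) : ℂ) * G z₀) + I * (B - ((z.im - z₀.im : ℝ) : ℂ) * G z₀) := by
    rw [claim, smul_eq_mul, decompose]; ring
  rw [final]
  calc ‖(A - ((z.re - z₀.re : ℝ) : ℂ) * G z₀) + I * (B - ((z.im - z₀.im : ℝ) : ℂ) * G z₀)‖
      ≤ ‖A - ((z.re - z₀.re : ℝ) : ℂ) * G z₀‖ + ‖I * (B - ((z.im - z₀.im : ℝ) : ℂ) * G z₀)‖ :=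
        norm_add_le _ _
    _ = ‖A - ((z.re - z₀.re : ℝ) : ℂ) * G z₀‖ + ‖B - ((z.im - z₀.im : ℝ) : ℂ) * G z₀‖ := by
        rw [norm_mul, Complex.norm_I, one_mul]
    _ ≤ (ε/2) * |z.re - z₀.re| + (ε/2) * |z.im - z₀.im| := by
        rw [EH, EV]; exact add_le_add bound1 bound2
    _ ≤ ε * ‖z - z₀‖ := by
        rw [← dist_eq_norm]
        nlinarith [hre, him, abs_nonneg (z.re - z₀.re), abs_nonneg (z.im - z₀.im), dist_nonneg (x := z) (y := z₀)]

lemma morera_ball {G : ℂ → ℂ} {c r : ℝ} (hr : 0 < r)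
    (hGc : ContinuousOn G (Metric.ball (c:ℂ) r))
    (hGd : ∀ z ∈ Metric.ball (c:ℂ) r, z.im ≠ 0 → DifferentiableAt ℂ G z) :
    AnalyticOnNhd ℂ G (Metric.ball (c:ℂ) r) := by
  have hΦ : DifferentiableOn ℂ (prim G c) (Metric.ball (c:ℂ) r) := fun z hz =>
    (prim_hasDerivAt hr hGc hGd hz).differentiableAt.differentiableWithinAt
  have hana : AnalyticOnNhd ℂ (prim G c) (Metric.ball (c:ℂ) r) :=
    hΦ.analyticOnNhd Metric.isOpen_ball
  exact hana.deriv.congr Metric.isOpen_ball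
    (fun z hz => (prim_hasDerivAt hr hGc hGd hz).deriv)

lemma conj_conj_differentiableAt {F : ℂ → ℂ} {z : ℂ}
    (h : DifferentiableAt ℂ F ((starRingEnd ℂ) z)) :
    DifferentiableAt ℂ (fun w => (starRingEnd ℂ) (F ((starRingEnd ℂ) w))) z := by
  set d := deriv F ((starRingEnd ℂ) z) with hd
  have H : HasDerivAt F d ((starRingEnd ℂ) z) := h.hasDerivAt
  rw [hasDerivAt_iff_isLittleO] at H
  have Hc : Filter.Tendsto (starRingEnd ℂ) (nhds z) (nhds ((starRingEnd ℂ) z)) :=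
    (Complex.continuous_conj).tendsto z
  have H2 := H.comp_tendsto Hc
  refine HasDerivAt.differentiableAt (f' := (starRingEnd ℂ) d) ?_
  rw [hasDerivAt_iff_isLittleO, Asymptotics.isLittleO_iff]
  rw [Asymptotics.isLittleO_iff] at H2
  intro c hc
  filter_upwards [H2 hc] with w hw
  simp only [Function.comp_apply, smul_eq_mul] at hw ⊢
  have e1 : (starRingEnd ℂ) (F ((starRingEnd ℂ) w)) - (starRingEnd ℂ) (F ((starRingEnd ℂ) z))
      - (w - z) * (starRingEnd ℂ) d
      = (starRingEnd ℂ) (F ((starRingEnd ℂ) w) - F ((starRingEnd ℂ) z)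
          - ((starRingEnd ℂ) w - (starRingEnd ℂ) z) * d) := by
    simp only [map_sub, map_mul, Complex.conj_conj]
  have e2 : ‖w - z‖ = ‖(starRingEnd ℂ) w - (starRingEnd ℂ) z‖ := by
    rw [← map_sub, RCLike.norm_conj]
  rw [e1, RCLike.norm_conj, e2]
  exact hw

set_option maxHeartbeats 2000000 in
theorem upper_vanish {F : ℂ → ℂ} {a b : ℝ} (hab : a < b)
    (hFc : ContinuousOn F {z : ℂ | 0 ≤ z.im})
    (hFd : DifferentiableOn ℂ F {z : ℂ | 0 < z.im})
    (hvan : ∀ t : ℝ, a < t → t < b → F (t : ℂ) = 0) :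
    ∀ t : ℝ, F (t : ℂ) = 0 := by
  have hopen : IsOpen {z : ℂ | 0 < z.im} := isOpen_lt continuous_const Complex.continuous_im
  have hFdAt : ∀ z : ℂ, 0 < z.im → DifferentiableAt ℂ F z := fun z hz =>
    hFd.differentiableAt (hopen.mem_nhds hz)
  set c : ℝ := (a + b) / 2 with hc
  set r : ℝ := (b - a) / 2 with hrdef
  have hr : 0 < r := by rw [hrdef]; linarith
  set G : ℂ → ℂ := fun z => if 0 ≤ z.im then F z else (starRingEnd ℂ) (F ((starRingEnd ℂ) z)) with hG
  -- G agrees with F on the closed upper half plane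
  have hGF : ∀ z : ℂ, 0 ≤ z.im → G z = F z := fun z hz => if_pos hz
  clear_value c r G
  -- continuity of G on the ball
  have hGc : ContinuousOn G (Metric.ball (c:ℂ) r) := by
    intro z hz
    rcases lt_trichotomy z.im 0 with hzi | hzi | hzi
    · -- lower half: G eventually equals the reflected function
      have hopen' : IsOpen {w : ℂ | w.im < 0} := isOpen_lt Complex.continuous_im continuous_const
      have heq : G =ᶠ[nhds z] fun w => (starRingEnd ℂ) (F ((starRingEnd ℂ) w)) := by
        filter_upwards [hopen'.mem_nhds hzi] with w hw
        simp only [hG, if_neg (not_le.2 hw)]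
      have hcF : ContinuousAt F ((starRingEnd ℂ) z) := by
        refine hFc.continuousAt ?_
        refine mem_nhds_iff.2 ⟨{w : ℂ | 0 < w.im}, fun w hw => le_of_lt (show (0:ℝ) < w.im from hw), hopen, ?_⟩
        simpa using hzi
      have : ContinuousAt (fun w => (starRingEnd ℂ) (F ((starRingEnd ℂ) w))) z :=
        Complex.continuous_conj.continuousAt.comp
          (hcF.comp Complex.continuous_conj.continuousAt)
      exact (this.congr heq.symm).continuousWithinAt
    · -- on the real axis inside the ball
      have hre : a < z.re ∧ z.re < b := by
        have := (mem_ball_sq hr z).1 hz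
        rw [hzi] at this
        constructor <;> nlinarith
      have hzre : z = ((z.re : ℝ) : ℂ) := by
        apply Complex.ext <;> simp [hzi]
      have hFz : F z = 0 := by rw [hzre]; exact hvan z.re hre.1 hre.2
      have hGz : G z = 0 := by rw [hGF z (le_of_eq hzi.symm)]; exact hFz
      rw [Metric.continuousWithinAt_iff]
      intro ε hε
      have hcw : ContinuousWithinAt F {w : ℂ | 0 ≤ w.im} z := hFc z (by simp [hzi])
      rw [Metric.continuousWithinAt_iff] at hcw
      obtain ⟨δ, hδpos, hδ⟩ := hcw ε hε
      refine ⟨δ, hδpos, fun w _ hwz => ?_⟩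
      rw [hGz, dist_zero_right]
      by_cases hwi : 0 ≤ w.im
      · rw [hGF w hwi]
        have := hδ (x := w) (by exact hwi) hwz
        rwa [hFz, dist_zero_right] at this
      · simp only [hG, if_neg hwi]
        rw [RCLike.norm_conj]
        have hwc : ((starRingEnd ℂ) w).im ≥ 0 := by
          simp only [Complex.conj_im]; linarith [not_le.1 hwi]
        have hdist : dist ((starRingEnd ℂ) w) z < δ := by
          have : z = (starRingEnd ℂ) z := by
            apply Complex.ext <;> simp [hzi]
          calc dist ((starRingEnd ℂ) w) z = dist ((starRingEnd ℂ) w) ((starRingEnd ℂ) z) := by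
                rw [show (starRingEnd ℂ) z = z from by apply Complex.ext <;> simp [hzi]]
          _ = dist w z := Complex.dist_conj_conj w z
          _ < δ := hwz
        have := hδ (x := (starRingEnd ℂ) w) hwc hdist
        rwa [hFz, dist_zero_right] at this
    · -- upper half
      have heq : G =ᶠ[nhds z] F := by
        filter_upwards [hopen.mem_nhds hzi] with w hw
        exact hGF w (le_of_lt hw)
      have : ContinuousAt F z := hFc.continuousAt
        (mem_nhds_iff.2 ⟨{w : ℂ | 0 < w.im}, fun w hw => le_of_lt (show (0:ℝ) < w.im from hw), hopen, hzi⟩)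
      exact (this.congr heq.symm).continuousWithinAt
  -- differentiability of G off the real axis
  have hGd : ∀ z ∈ Metric.ball (c:ℂ) r, z.im ≠ 0 → DifferentiableAt ℂ G z := by
    intro z _ hzi
    rcases hzi.lt_or_gt with hlt | hlt
    · have hopen' : IsOpen {w : ℂ | w.im < 0} := isOpen_lt Complex.continuous_im continuous_const
      have heq : G =ᶠ[nhds z] fun w => (starRingEnd ℂ) (F ((starRingEnd ℂ) w)) := by
        filter_upwards [hopen'.mem_nhds hlt] with w hw
        simp only [hG, if_neg (not_le.2 hw)]
      refine (heq.differentiableAt_iff).2 (conj_conj_differentiableAt ?_)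
      exact hFdAt _ (by simpa using hlt)
    · have heq : G =ᶠ[nhds z] F := by
        filter_upwards [hopen.mem_nhds hlt] with w hw
        exact hGF w (le_of_lt hw)
      exact (heq.differentiableAt_iff).2 (hFdAt z hlt)
  -- Morera: G is analytic on the ball
  have hGA : AnalyticOnNhd ℂ G (Metric.ball (c:ℂ) r) := morera_ball hr hGc hGd
  -- G vanishes frequently near c
  have hcmem : (c:ℂ) ∈ Metric.ball (c:ℂ) r := by simp [hr]
  have hfreq : ∃ᶠ z in nhdsWithin (c:ℂ) {(c:ℂ)}ᶜ, G z = 0 := by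
    rw [Filter.frequently_iff]
    intro V hV
    rw [mem_nhdsWithin] at hV
    obtain ⟨W, hWopen, hWmem, hWsub⟩ := hV
    obtain ⟨ε, hεpos, hεsub⟩ := Metric.isOpen_iff.1 hWopen _ hWmem
    set t : ℝ := c + min ε r / 2 with ht
    have htpos : 0 < min ε r / 2 := by positivity
    have h1 : (t:ℂ) ∈ Metric.ball (c:ℂ) ε := by
      rw [Metric.mem_ball, Complex.dist_eq, ← Complex.ofReal_sub, Complex.norm_real, Real.norm_eq_abs]
      rw [ht]
      rw [show c + min ε r / 2 - c = min ε r / 2 by ring, abs_of_pos htpos]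
      calc min ε r / 2 ≤ ε / 2 := by
            have := min_le_left ε r; linarith
      _ < ε := by linarith
    have h2 : (t:ℂ) ≠ (c:ℂ) := by
      intro h
      have := Complex.ofReal_injective h
      rw [ht] at this; linarith
    refine ⟨(t:ℂ), hWsub ⟨hεsub h1, h2⟩, ?_⟩
    have htab : a < t ∧ t < b := by
      have h3 : min ε r / 2 < r := by
        have := min_le_right ε r; linarith
      constructor <;> rw [ht, hc] <;> [nlinarith [htpos]; nlinarith [h3]]
    have : G (t:ℂ) = F (t:ℂ) := hGF _ (by simp)
    rw [this]
    exact hvan t htab.1 htab.2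
  have hGzero : Set.EqOn G 0 (Metric.ball (c:ℂ) r) :=
    hGA.eqOn_zero_of_preconnected_of_frequently_eq_zero
      ((convex_ball _ _).isPreconnected) hcmem hfreq
  -- F is analytic on the upper half plane and vanishes near c + (r/2)I
  have hFA : AnalyticOnNhd ℂ F {z : ℂ | 0 < z.im} := hFd.analyticOnNhd hopen
  set z₁ : ℂ := (c:ℂ) + (r/2) * I with hz₁
  have hz₁im : z₁.im = r / 2 := by simp [hz₁]
  have hz₁mem : z₁ ∈ {z : ℂ | 0 < z.im} := by
    simp only [Set.mem_setOf_eq, hz₁im]; positivity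
  have hz₁ball : z₁ ∈ Metric.ball (c:ℂ) r := by
    rw [Metric.mem_ball, Complex.dist_eq]
    have e : z₁ - (c:ℂ) = ((r/2 : ℝ):ℂ) * I := by rw [hz₁]; push_cast; ring
    rw [e, norm_mul, Complex.norm_I, Complex.norm_real, Real.norm_eq_abs, mul_one, abs_of_pos (by positivity)]
    linarith
  have hfreq₁ : ∃ᶠ z in nhdsWithin z₁ {z₁}ᶜ, F z = 0 := by
    apply Filter.Eventually.frequently
    apply Filter.Eventually.filter_mono nhdsWithin_le_nhds
    have hO : IsOpen (Metric.ball (c:ℂ) r ∩ {z : ℂ | 0 < z.im}) :=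
      Metric.isOpen_ball.inter hopen
    filter_upwards [hO.mem_nhds ⟨hz₁ball, hz₁mem⟩] with w hw
    have := hGzero hw.1
    rw [← hGF w (le_of_lt hw.2)]
    simpa using this
  have hFzero : Set.EqOn F 0 {z : ℂ | 0 < z.im} :=
    hFA.eqOn_zero_of_preconnected_of_frequently_eq_zero
      ((convex_halfSpace_im_gt 0).isPreconnected) hz₁mem hfreq₁
  -- conclude on the real axis by continuity
  intro t
  have hcwt : ContinuousWithinAt F {z : ℂ | 0 ≤ z.im} (t:ℂ) := hFc _ (by simp)
  have hne : (nhdsWithin (t:ℂ) {z : ℂ | 0 < z.im}).NeBot := by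
    rw [← mem_closure_iff_nhdsWithin_neBot]
    have h1 : Filter.Tendsto (fun n : ℕ => (1/(n+1) : ℝ)) Filter.atTop (nhds 0) :=
      tendsto_one_div_add_atTop_nhds_zero_nat
    have h2 : Continuous (fun x : ℝ => (t:ℂ) + (x:ℂ) * I) := by fun_prop
    have h3 := (h2.tendsto 0).comp h1
    simp only [Function.comp_def, Complex.ofReal_zero, zero_mul, add_zero] at h3
    refine mem_closure_of_tendsto h3 ?_
    filter_upwards with n
    simp only [Set.mem_setOf_eq, Complex.add_im, Complex.ofReal_im, Complex.mul_im,
      Complex.I_im, Complex.I_re, Complex.ofReal_re]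
    positivity
  have htend : Filter.Tendsto F (nhdsWithin (t:ℂ) {z : ℂ | 0 < z.im}) (nhds (F (t:ℂ))) :=
    (hcwt.mono (fun z hz => le_of_lt (show (0:ℝ) < z.im from hz))).tendsto
  have hzero : Filter.Tendsto F (nhdsWithin (t:ℂ) {z : ℂ | 0 < z.im}) (nhds 0) := by
    refine Filter.Tendsto.congr' ?_ tendsto_const_nhds
    filter_upwards [self_mem_nhdsWithin] with w hw
    exact (hFzero hw).symm
  exact tendsto_nhds_unique htend hzero

/-- (One-dimensional version of "localization via position operators
conflicts with causality".)  Let `U a = exp(iaP)` be a strongly continuous unitary group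
with positive generator `P ≥ 0` (positivity expressed by bounded analytic extension of
all matrix elements to the upper half-plane), and let `E` be an orthogonal projection
such that `E · (U a) E (U a)⁻¹ = 0` for all `a` in some nonempty open interval not
containing `0`.  Then `E = 0`. -/
theorem stmt_2 {H : Type*} [NormedAddCommGroup H] [InnerProductSpace ℂ H] [CompleteSpace H]
    (U : ℝ → (H →L[ℂ] H))
    (hU0 : U 0 = 1)
    (hUgrp : ∀ s t : ℝ, U (s + t) = U s * U t)
    (hUunit : ∀ t : ℝ, star (U t) * U t = 1 ∧ U t * star (U t) = 1)
    (hUcont : ∀ x : H, Continuous fun t : ℝ => U t x)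
    (hpos : ∀ x y : H, ∃ F : ℂ → ℂ, ContinuousOn F {z : ℂ | 0 ≤ z.im} ∧
      DifferentiableOn ℂ F {z : ℂ | 0 < z.im} ∧
      (∃ C : ℝ, ∀ z ∈ {z : ℂ | 0 ≤ z.im}, ‖F z‖ ≤ C) ∧
      ∀ t : ℝ, F (t : ℂ) = (inner ℂ x (U t y) : ℂ))
    (E : H →L[ℂ] H) (hEproj : IsIdempotentElem E) (hEsa : IsSelfAdjoint E)
    (a b : ℝ) (hab : a < b) (h0 : (0 : ℝ) ∉ Set.Ioo a b)
    (horth : ∀ s ∈ Set.Ioo a b, E * (U s * E * star (U s)) = 0) :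
    E = 0 := by
  have hadj : ContinuousLinearMap.adjoint E = E := by
    rw [← ContinuousLinearMap.star_eq_adjoint]; exact hEsa.star_eq
  have horth' : ∀ s, a < s → s < b → E * U s * E = 0 := by
    intro s hs1 hs2
    have h := horth s ⟨hs1, hs2⟩
    have e1 : E * (U s * E * star (U s)) * U s = E * U s * E := by
      calc E * (U s * E * star (U s)) * U s
          = E * (U s * E) * (star (U s) * U s) := by simp only [mul_assoc]
      _ = E * (U s * E) := by rw [(hUunit s).1, mul_one]
      _ = E * U s * E := by rw [mul_assoc]
    rw [← e1, h, zero_mul]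
  ext x
  simp only [ContinuousLinearMap.zero_apply]
  obtain ⟨F, hFc, hFd, -, hFt⟩ := hpos (E x) (E x)
  have key : ∀ t : ℝ, F (t : ℂ) = (inner ℂ x ((E * U t * E) x) : ℂ) := by
    intro t
    rw [hFt t]
    calc (inner ℂ (E x) (U t (E x)) : ℂ)
        = (inner ℂ ((ContinuousLinearMap.adjoint E) x) (U t (E x)) : ℂ) := by rw [hadj]
    _ = (inner ℂ x (E (U t (E x))) : ℂ) := ContinuousLinearMap.adjoint_inner_left E _ _
    _ = (inner ℂ x ((E * U t * E) x) : ℂ) := by simp [ContinuousLinearMap.mul_apply]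
  have hvan : ∀ t : ℝ, a < t → t < b → F (t : ℂ) = 0 := by
    intro t ht1 ht2
    rw [key t, horth' t ht1 ht2]
    simp
  have hzero := upper_vanish hab hFc hFd hvan 0
  rw [hFt 0, hU0] at hzero
  simp only [ContinuousLinearMap.one_apply] at hzero
  exact inner_self_eq_zero.1 hzero
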